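/- Let ∥ be a Clifford-like parallelism and let α be a ring automorphism of H. Then α preserves ∥ if and only if α(ℱ) = ℱ. -/
import Mathlib


variable (F H : Type*) [Field F] [DivisionRing H] [Algebra F H]

/-- A *line* of the projective space `ℙ(H_F)`: a 2-dimensional `F`-subspace of `H`. -/
abbrev Line := {M : Submodule F H // Module.finrank F M = 2}

/-- `M ∥ℓ N` : there is `g ≠ 0` with `N = g·M`. -/
def LeftPar (M N : Submodule F H) : Prop :=
  ∃ g : H, g ≠ 0 ∧ (N : Set H) = (fun m => g * m) '' (M : Set H)

/-- `M ∥r N` : there is `g ≠ 0` with `N = M·g`. -/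
def RightPar (M N : Submodule F H) : Prop :=
  ∃ g : H, g ≠ 0 ∧ (N : Set H) = (fun m => m * g) '' (M : Set H)

/-- The left parallel class `Sℓ(M) = {N | N ∥ℓ M}`. -/
def leftClass (M : Line F H) : Set (Line F H) := {N | LeftPar F H N.1 M.1}

/-- The right parallel class `Sr(M) = {N | N ∥r M}`. -/
def rightClass (M : Line F H) : Set (Line F H) := {N | RightPar F H N.1 M.1}

/-- The `∥`-class `S(M) = {N | N ∥ M}`. -/
def parClass (par : Line F H → Line F H → Prop) (M : Line F H) : Set (Line F H) :=
  {N | par N M}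

/-- A parallelism: an equivalence relation on lines such that for every `x ≠ 0`
and every line `M` there is exactly one line `N` with `x ∈ N` and `N ∥ M`. -/
def IsParallelism (par : Line F H → Line F H → Prop) : Prop :=
  Equivalence par ∧
    ∀ x : H, x ≠ 0 → ∀ M : Line F H, ∃! N : Line F H, x ∈ N.1 ∧ par N M

/-- A Clifford-like parallelism: every `∥`-class is a left or a right parallel class. -/
def IsCliffordLike (par : Line F H → Line F H → Prop) : Prop :=
  IsParallelism F H par ∧
    ∀ M : Line F H,
      parClass F H par M = leftClass F H M ∨ parClass F H par M = rightClass F H M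

/-- The star `𝒜` of lines through `F·1`, i.e. the lines containing `1`. -/
def starLines : Set (Line F H) := {L | (1 : H) ∈ L.1}

/-- The set `ℱ` of lines of `𝒜` whose `∥`-class is a left parallel class. -/
def calF (par : Line F H → Line F H → Prop) : Set (Line F H) :=
  {L | (1 : H) ∈ L.1 ∧ parClass F H par L = leftClass F H L}

/-- A semilinear bijection of `H` (over some field automorphism of `F`). -/
def IsSemilinear (β : H → H) : Prop :=
  Function.Bijective β ∧ (∀ x y : H, β (x + y) = β x + β y) ∧
    ∃ σ : F ≃+* F, ∀ (a : F) (x : H), β (a • x) = σ a • β x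

/-- `β` preserves the parallelism `par`: for all lines `M, N`,
`M ∥ N ↔ β(M) ∥ β(N)`, where `β(M)` denotes the line whose carrier is `β '' M`. -/
def Preserves (β : H → H) (par : Line F H → Line F H → Prop) : Prop :=
  ∀ M N M' N' : Line F H,
    (M'.1 : Set H) = β '' (M.1 : Set H) →
    (N'.1 : Set H) = β '' (N.1 : Set H) →
    (par M N ↔ par M' N')

/-- The image `β(𝒢)` of a set of lines under `β`. -/
def imageLines (β : H → H) (G : Set (Line F H)) : Set (Line F H) :=
  {L' | ∃ L ∈ G, (L'.1 : Set H) = β '' (L.1 : Set H)}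

/-- The centre of `H` is exactly `F·1`. -/
def CenterEqF : Prop :=
  ∀ z : H, (∀ x : H, z * x = x * z) ↔ ∃ a : F, z = algebraMap F H a

/-- Ring automorphism of `H`, as a plain function. -/
def IsRingAutFn (α : H → H) : Prop :=
  Function.Bijective α ∧ (∀ x y : H, α (x + y) = α x + α y) ∧ α 1 = 1 ∧
    ∀ x y : H, α (x * y) = α x * α y

/-- Ring antiautomorphism of `H`, as a plain function. -/
def IsRingAntiAutFn (α : H → H) : Prop :=
  Function.Bijective α ∧ (∀ x y : H, α (x + y) = α x + α y) ∧ α 1 = 1 ∧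
    ∀ x y : H, α (x * y) = α y * α x

lemma exists_sigma (hcenter : CenterEqF F H) (α : H ≃+* H) :
    ∃ σ : F ≃+* F, ∀ (a : F) (x : H), α (a • x) = σ a • α x := by
  have hinj : Function.Injective (algebraMap F H) := (algebraMap F H).injective
  have key : ∀ (β : H ≃+* H) (a : F), ∃ b : F, β (algebraMap F H a) = algebraMap F H b := by
    intro β a
    apply (hcenter _).1
    intro x
    have hcen : ∀ y : H, algebraMap F H a * y = y * algebraMap F H a :=
      fun y => (hcenter (algebraMap F H a)).2 ⟨a, rfl⟩ y
    calc β (algebraMap F H a) * x = β (algebraMap F H a) * β (β.symm x) := by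
            rw [β.apply_symm_apply]
      _ = β (algebraMap F H a * β.symm x) := (β.map_mul _ _).symm
      _ = β (β.symm x * algebraMap F H a) := by rw [hcen]
      _ = x * β (algebraMap F H a) := by rw [β.map_mul, β.apply_symm_apply]
  choose f hf using key α
  choose g hg using key α.symm
  have hgf : ∀ a, g (f a) = a := fun a => hinj <| by
    rw [← hg, ← hf, α.symm_apply_apply]
  have hfg : ∀ a, f (g a) = a := fun a => hinj <| by
    rw [← hf, ← hg, α.apply_symm_apply]
  have hmul : ∀ a b, f (a * b) = f a * f b := fun a b => hinj <| by
    rw [map_mul, ← hf, ← hf, ← hf, map_mul, map_mul]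
  have hadd : ∀ a b, f (a + b) = f a + f b := fun a b => hinj <| by
    rw [map_add, ← hf, ← hf, ← hf, map_add, map_add]
  refine ⟨⟨⟨f, g, hgf, hfg⟩, hmul, hadd⟩, fun a x => ?_⟩
  rw [Algebra.smul_def, Algebra.smul_def, map_mul, hf]
  rfl

lemma exists_image_line (hcenter : CenterEqF F H) (α : H ≃+* H) (M : Line F H) :
    ∃ M' : Line F H, (M'.1 : Set H) = ⇑α '' (M.1 : Set H) := by
  obtain ⟨σ, hσ⟩ := exists_sigma F H hcenter α
  set NN : Submodule F H :=
    { carrier := ⇑α '' (M.1 : Set H)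
      add_mem' := by rintro a b ⟨x, hx, rfl⟩ ⟨y, hy, rfl⟩
                     exact ⟨x + y, M.1.add_mem hx hy, map_add α x y⟩
      zero_mem' := ⟨0, M.1.zero_mem, map_zero α⟩
      smul_mem' := by rintro c a ⟨x, hx, rfl⟩
                      exact ⟨σ.symm c • x, M.1.smul_mem _ hx, by
                        rw [hσ, RingEquiv.apply_symm_apply]⟩ } with hNN
  have hmem : ∀ y : H, y ∈ NN ↔ y ∈ ⇑α '' (M.1 : Set H) := fun y => Iff.rfl
  have hr : Module.rank F M.1 = Module.rank F NN := by
    refine rank_eq_of_equiv_equiv (⟨⇑σ, map_zero σ⟩ : ZeroHom F F)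
      { toFun := fun x => ⟨α x, ⟨x.1, x.2, rfl⟩⟩
        invFun := fun y => ⟨α.symm y.1, by
          obtain ⟨x, hx, hxy⟩ := (hmem y.1).1 y.2
          simpa [← hxy] using hx⟩
        left_inv := fun x => by ext; simp
        right_inv := fun y => by ext; simp
        map_add' := fun x y => by ext; simp } σ.bijective ?_
    intro r m
    ext
    exact hσ r m.1
  have hfr : Module.finrank F NN = 2 := by
    rw [Module.finrank, ← hr, ← Module.finrank, M.2]
  exact ⟨⟨NN, hfr⟩, rfl⟩

lemma line_ext {M N : Line F H} (h : (M.1 : Set H) = (N.1 : Set H)) : M = N :=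
  Subtype.ext (SetLike.ext' h)

lemma image_symm (α : H ≃+* H) {s t : Set H} (h : t = ⇑α '' s) : s = ⇑α.symm '' t := by
  rw [h, ← Set.image_comp]
  ext x
  simp

lemma leftPar_map (α : H ≃+* H) {M N M' N' : Submodule F H}
    (hM : (M' : Set H) = ⇑α '' (M : Set H)) (hN : (N' : Set H) = ⇑α '' (N : Set H))
    (h : LeftPar F H M N) : LeftPar F H M' N' := by
  obtain ⟨g, hg, hgs⟩ := h
  refine ⟨α g, by simpa using hg, ?_⟩
  rw [hN, hgs, hM, ← Set.image_comp, ← Set.image_comp]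
  apply Set.image_congr'
  intro x
  simp

lemma rightPar_map (α : H ≃+* H) {M N M' N' : Submodule F H}
    (hM : (M' : Set H) = ⇑α '' (M : Set H)) (hN : (N' : Set H) = ⇑α '' (N : Set H))
    (h : RightPar F H M N) : RightPar F H M' N' := by
  obtain ⟨g, hg, hgs⟩ := h
  refine ⟨α g, by simpa using hg, ?_⟩
  rw [hN, hgs, hM, ← Set.image_comp, ← Set.image_comp]
  apply Set.image_congr'
  intro x
  simp

lemma leftPar_map_iff (α : H ≃+* H) {M N M' N' : Submodule F H}
    (hM : (M' : Set H) = ⇑α '' (M : Set H)) (hN : (N' : Set H) = ⇑α '' (N : Set H)) :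
    LeftPar F H M N ↔ LeftPar F H M' N' :=
  ⟨leftPar_map F H α hM hN,
   leftPar_map F H α.symm (image_symm H α hM) (image_symm H α hN)⟩

lemma rightPar_map_iff (α : H ≃+* H) {M N M' N' : Submodule F H}
    (hM : (M' : Set H) = ⇑α '' (M : Set H)) (hN : (N' : Set H) = ⇑α '' (N : Set H)) :
    RightPar F H M N ↔ RightPar F H M' N' :=
  ⟨rightPar_map F H α hM hN,
   rightPar_map F H α.symm (image_symm H α hM) (image_symm H α hN)⟩


lemma one_mem_image_line (α : H ≃+* H) {L L' : Line F H}
    (hc : (L'.1 : Set H) = ⇑α '' (L.1 : Set H)) (h1 : (1 : H) ∈ L.1) : (1 : H) ∈ L'.1 := by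
  have : (1 : H) ∈ (L'.1 : Set H) := by
    rw [hc]
    exact ⟨1, h1, map_one α⟩
  exact this

/-- Core transport lemma: if `α(ℱ) = ℱ` then `α` maps parallel lines to parallel lines. -/
lemma par_map (hcenter : CenterEqF F H)
    (par : Line F H → Line F H → Prop) (hpar : IsCliffordLike F H par)
    (α : H ≃+* H) (hF : imageLines F H (⇑α) (calF F H par) = calF F H par)
    {M N M' N' : Line F H}
    (hM : (M'.1 : Set H) = ⇑α '' (M.1 : Set H))
    (hN : (N'.1 : Set H) = ⇑α '' (N.1 : Set H))
    (h : par M N) : par M' N' := by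
  obtain ⟨⟨heq, hex⟩, hcl⟩ := hpar
  obtain ⟨L, ⟨hL1, hLM⟩, -⟩ := hex 1 one_ne_zero M
  have hML : M ∈ parClass F H par L := heq.symm hLM
  have hNL : N ∈ parClass F H par L := heq.trans (heq.symm h) (heq.symm hLM)
  obtain ⟨L', hL'⟩ := exists_image_line F H hcenter α L
  have hL'1 : (1 : H) ∈ L'.1 := one_mem_image_line F H α hL' hL1
  by_cases hLF : L ∈ calF F H par
  · have hleft : parClass F H par L = leftClass F H L := hLF.2
    have hL'F : L' ∈ calF F H par := by
      rw [← hF]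
      exact ⟨L, hLF, hL'⟩
    have hM'L' : M' ∈ parClass F H par L' := by
      rw [hL'F.2]
      exact leftPar_map F H α hM hL' ((Set.ext_iff.mp hleft M).mp hML)
    have hN'L' : N' ∈ parClass F H par L' := by
      rw [hL'F.2]
      exact leftPar_map F H α hN hL' ((Set.ext_iff.mp hleft N).mp hNL)
    exact heq.trans hM'L' (heq.symm hN'L')
  · have hright : parClass F H par L = rightClass F H L := by
      rcases hcl L with hc | hc
      · exact absurd ⟨hL1, hc⟩ hLF
      · exact hc
    have hL'F : L' ∉ calF F H par := by
      intro hmem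
      rw [← hF] at hmem
      obtain ⟨L₀, hL₀F, hc⟩ := hmem
      have : L₀ = L := line_ext F H <|
        (Set.image_injective.mpr α.injective) (hc.symm.trans hL')
      exact hLF (this ▸ hL₀F)
    have hright' : parClass F H par L' = rightClass F H L' := by
      rcases hcl L' with hc | hc
      · exact absurd ⟨hL'1, hc⟩ hL'F
      · exact hc
    have hM'L' : M' ∈ parClass F H par L' := by
      rw [hright']
      exact rightPar_map F H α hM hL' ((Set.ext_iff.mp hright M).mp hML)
    have hN'L' : N' ∈ parClass F H par L' := by
      rw [hright']
      exact rightPar_map F H α hN hL' ((Set.ext_iff.mp hright N).mp hNL)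
    exact heq.trans hM'L' (heq.symm hN'L')

lemma imageLines_symm (hcenter : CenterEqF F H) (α : H ≃+* H) {G : Set (Line F H)}
    (hG : imageLines F H (⇑α) G = G) : imageLines F H (⇑α.symm) G = G := by
  ext L'
  constructor
  · rintro ⟨L, hLG, hc⟩
    rw [← hG] at hLG
    obtain ⟨L₀, hL₀G, hc₀⟩ := hLG
    have : L' = L₀ := line_ext F H <| by
      rw [hc, hc₀, ← Set.image_comp]
      ext x
      simp
    exact this ▸ hL₀G
  · intro hLG
    obtain ⟨K, hK⟩ := exists_image_line F H hcenter α L'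
    refine ⟨K, ?_, image_symm H α hK⟩
    rw [← hG]
    exact ⟨L', hLG, hK⟩

/-- If `α` preserves `par`, then `α` maps `ℱ` into `ℱ`. -/
lemma calF_map (hcenter : CenterEqF F H)
    (par : Line F H → Line F H → Prop)
    (α : H ≃+* H) (hp : Preserves F H (⇑α) par)
    {L L' : Line F H} (hc : (L'.1 : Set H) = ⇑α '' (L.1 : Set H))
    (hL : L ∈ calF F H par) : L' ∈ calF F H par := by
  refine ⟨one_mem_image_line F H α hc hL.1, ?_⟩
  ext N'
  obtain ⟨N, hN⟩ := exists_image_line F H hcenter α.symm N'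
  have hN' : (N'.1 : Set H) = ⇑α '' (N.1 : Set H) := by
    rw [image_symm H α.symm hN]
    rfl
  constructor
  · intro hpar'
    have hNL : par N L := (hp N L N' L' hN' hc).mpr hpar'
    exact leftPar_map F H α hN' hc ((Set.ext_iff.mp hL.2 N).mp hNL)
  · intro hl
    have hNL : N ∈ leftClass F H L :=
      leftPar_map F H α.symm (image_symm H α hN') (image_symm H α hc) hl
    exact (hp N L N' L' hN' hc).mp ((Set.ext_iff.mp hL.2 N).mpr hNL)

/-- An automorphism `α` of the quaternion skew field `H` preserves a
Clifford-like parallelism `∥` if and only if `α(ℱ) = ℱ`. -/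
theorem ringAut_preserves_iff
    (hcenter : CenterEqF F H) (hdim : Module.finrank F H = 4)
    (par : Line F H → Line F H → Prop) (hpar : IsCliffordLike F H par)
    (α : H ≃+* H) :
    Preserves F H (⇑α) par ↔
      imageLines F H (⇑α) (calF F H par) = calF F H par := by
  constructor
  · intro hp
    have hp' : Preserves F H (⇑α.symm) par := by
      intro M N M' N' hM hN
      exact (hp M' N' M N (image_symm H α.symm hM) (image_symm H α.symm hN)).symm
    ext L'
    constructor
    · rintro ⟨L, hLF, hc⟩
      exact calF_map F H hcenter par α hp hc hLF
    · intro hL'F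
      obtain ⟨L, hL⟩ := exists_image_line F H hcenter α.symm L'
      refine ⟨L, ?_, image_symm H α.symm hL⟩
      exact calF_map F H hcenter par α.symm hp' hL hL'F
  · intro hF M N M' N' hM hN
    constructor
    · exact par_map F H hcenter par hpar α hF hM hN
    · exact par_map F H hcenter par hpar α.symm (imageLines_symm F H hcenter α hF)
        (image_symm H α hM) (image_symm H α hN)
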